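/- For fixed scale vector Σ ∈ (0,∞)^p, finite mixtures of p-variate logistic distributions with common scale Σ are identifiable: equality of two such mixture cdfs on ℝ^p implies equality of the number of components, the weights, and the location vectors (as unordered collections). -/

import Mathlib

open Polynomial Finset in
lemma linIndep {ι : Type} [Fintype ι] [DecidableEq ι] (c α : ι → ℝ)
    (hc : ∀ i, 0 < c i) (hcinj : Function.Injective c)
    (h : ∀ s : ℝ, 0 < s → ∑ i, α i * (1 + c i * s)⁻¹ = 0) :
    ∀ i, α i = 0 := by
  classical
  set P : ℝ[X] :=
    ∑ i, C (α i) * ∏ i' ∈ Finset.univ.erase i, (C (c i') * X + 1) with hP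
  have hPz : P = 0 := by
    apply Polynomial.eq_zero_of_infinite_isRoot
    apply (Set.Ioi_infinite (0:ℝ)).mono
    intro x hx
    have hx0 : (0:ℝ) < x := hx
    have hne : ∀ i : ι, c i * x + 1 ≠ 0 := fun i =>
      ne_of_gt (by have := hc i; nlinarith)
    have heval : P.eval x = (∏ i, (c i * x + 1)) * ∑ i, α i * (1 + c i * x)⁻¹ := by
      rw [hP]
      simp only [Polynomial.eval_finset_sum, Polynomial.eval_mul, Polynomial.eval_C,
        Polynomial.eval_prod, Polynomial.eval_add, Polynomial.eval_one, Polynomial.eval_X,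
        Finset.mul_sum]
      refine Finset.sum_congr rfl fun i _ => ?_
      have : ∏ i' ∈ Finset.univ.erase i, (c i' * x + 1)
          = (∏ i'', (c i'' * x + 1)) * (1 + c i * x)⁻¹ := by
        rw [← Finset.mul_prod_erase Finset.univ _ (Finset.mem_univ i)]
        rw [mul_comm, ← mul_assoc, mul_comm ((1 + c i * x)⁻¹)]
        rw [add_comm (1:ℝ) (c i * x), mul_inv_cancel₀ (hne i), one_mul]
      rw [this]
      ring
    show P.IsRoot x
    rw [Polynomial.IsRoot, heval, h x hx0, mul_zero]
  intro j
  have hev := congrArg (Polynomial.eval (-(c j)⁻¹)) hPz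
  rw [hP] at hev
  simp only [Polynomial.eval_finset_sum, Polynomial.eval_mul, Polynomial.eval_C,
    Polynomial.eval_prod, Polynomial.eval_add, Polynomial.eval_one, Polynomial.eval_X,
    Polynomial.eval_zero] at hev
  rw [Finset.sum_eq_single j] at hev
  · have hprod : ∏ i' ∈ Finset.univ.erase j, (c i' * -(c j)⁻¹ + 1) ≠ 0 := by
      apply Finset.prod_ne_zero_iff.mpr
      intro i' hi'
      have hne : c i' ≠ c j := fun hcc => (Finset.mem_erase.mp hi').1 (hcinj hcc)
      intro h0
      apply hne
      have hcj : c j ≠ 0 := ne_of_gt (hc j)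
      field_simp at h0
      linarith
    rcases mul_eq_zero.mp hev with h1 | h2
    · exact h1
    · exact absurd h2 hprod
  · intro i _ hij
    have : c j * -(c j)⁻¹ + 1 = 0 := by
      rw [mul_neg, mul_inv_cancel₀ (ne_of_gt (hc j))]; ring
    rw [Finset.prod_eq_zero (Finset.mem_erase.mpr ⟨Ne.symm hij, Finset.mem_univ j⟩) this, mul_zero]
  · intro hj; exact absurd (Finset.mem_univ j) hj

lemma fiberZero {ι : Type} [Fintype ι] [DecidableEq ι] (c α : ι → ℝ)
    (hc : ∀ i, 0 < c i)
    (h : ∀ s : ℝ, 0 < s → ∑ i, α i * (1 + c i * s)⁻¹ = 0) (v : ℝ) :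
    ∑ i ∈ Finset.univ.filter (fun i => c i = v), α i = 0 := by
  classical
  set T : Finset ℝ := Finset.image c Finset.univ with hT
  by_cases hv : v ∈ T
  · have key : ∀ w : {x // x ∈ T}, (∑ i ∈ Finset.univ.filter (fun i => c i = w.1), α i) = 0 := by
      apply linIndep (fun w : {x // x ∈ T} => w.1)
        (fun w => ∑ i ∈ Finset.univ.filter (fun i => c i = w.1), α i)
      · rintro ⟨w, hw⟩
        obtain ⟨i, _, rfl⟩ := Finset.mem_image.mp hw
        exact hc i
      · exact fun a b hab => Subtype.ext hab
      · intro s hs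
        have h1 : ∑ w : {x // x ∈ T},
            (∑ i ∈ Finset.univ.filter (fun i => c i = w.1), α i) * (1 + w.1 * s)⁻¹
            = ∑ w ∈ T, (∑ i ∈ Finset.univ.filter (fun i => c i = w), α i) * (1 + w * s)⁻¹ := by
          rw [← Finset.sum_attach T (fun w => (∑ i ∈ Finset.univ.filter (fun i => c i = w), α i) * (1 + w * s)⁻¹)]
          rfl
        rw [h1]
        have h2 : ∀ w ∈ T, (∑ i ∈ Finset.univ.filter (fun i => c i = w), α i) * (1 + w * s)⁻¹
            = ∑ i ∈ Finset.univ.filter (fun i => c i = w), α i * (1 + c i * s)⁻¹ := by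
          intro w _
          rw [Finset.sum_mul]
          refine Finset.sum_congr rfl fun i hi => ?_
          rw [(Finset.mem_filter.mp hi).2]
        rw [Finset.sum_congr rfl h2,
          Finset.sum_fiberwise_of_maps_to (fun i _ => Finset.mem_image_of_mem c (Finset.mem_univ i))]
        exact h s hs
    exact key ⟨v, hv⟩
  · rw [Finset.filter_false_of_mem, Finset.sum_empty]
    rintro i _ rfl
    exact hv (Finset.mem_image_of_mem c (Finset.mem_univ i))

theorem multivariate_logistic_mixture_identifiable_fixed_scale
    (p s t : ℕ)
    (Sc : Fin p → ℝ) (hSc : ∀ k, 0 < Sc k)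
    (π : Fin s → ℝ) (μ : Fin s → Fin p → ℝ)
    (π' : Fin t → ℝ) (μ' : Fin t → Fin p → ℝ)
    (hπ : ∀ i, π i ∈ Set.Ioo (0 : ℝ) 1) (hπ' : ∀ j, π' j ∈ Set.Ioo (0 : ℝ) 1)
    (hsum : ∑ i, π i = 1) (hsum' : ∑ j, π' j = 1)
    (hμ : Function.Injective μ) (hμ' : Function.Injective μ')
    (h : ∀ x : Fin p → ℝ,
      ∑ i, π i * (1 + ∑ k, Real.exp (-(x k - μ i k) / Sc k))⁻¹ =
      ∑ j, π' j * (1 + ∑ k, Real.exp (-(x k - μ' j k) / Sc k))⁻¹) :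
    ∃ e : Fin s ≃ Fin t, ∀ i, π' (e i) = π i ∧ μ' (e i) = μ i := by
  classical
  rcases Nat.eq_zero_or_pos p with hp | hp
  · -- degenerate case p = 0
    subst hp
    have hμall : ∀ (a b : Fin 0 → ℝ), a = b := fun a b => funext fun k => k.elim0
    have hs1 : s = 1 := by
      rcases Nat.lt_or_ge s 2 with hs | hs
      · interval_cases s
        · simp at hsum
        · rfl
      · exfalso
        have h01 : (⟨0, by omega⟩ : Fin s) ≠ ⟨1, by omega⟩ := by simp [Fin.ext_iff]
        exact h01 (hμ (hμall _ _))
    have ht1 : t = 1 := by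
      rcases Nat.lt_or_ge t 2 with ht | ht
      · interval_cases t
        · simp at hsum'
        · rfl
      · exfalso
        have h01 : (⟨0, by omega⟩ : Fin t) ≠ ⟨1, by omega⟩ := by simp [Fin.ext_iff]
        exact h01 (hμ' (hμall _ _))
    subst hs1; subst ht1
    refine ⟨Equiv.refl _, fun i => ⟨?_, hμall _ _⟩⟩
    have : π' (Equiv.refl (Fin 1) i) = π' 0 := by congr 1; exact Subsingleton.elim _ _
    rw [this]
    have : π i = π 0 := by congr 1; exact Subsingleton.elim _ _
    rw [this]
    rw [Fin.sum_univ_one] at hsum hsum'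
    rw [hsum, hsum']
  · -- main case p > 0
    have hpne : (Finset.univ : Finset (Fin p)).Nonempty := by
      simpa [Finset.univ_nonempty_iff] using Fin.pos_iff_nonempty.mp hp
    set F : Finset (Fin p → ℝ) :=
      Finset.image μ Finset.univ ∪ Finset.image μ' Finset.univ with hF
    -- the polynomial detecting coincidence of C-values along the curve (x, x², ...)
    set q : (Fin p → ℝ) → (Fin p → ℝ) → Polynomial ℝ := fun a b =>
      ∑ k : Fin p, Polynomial.C (Real.exp (a k / Sc k) - Real.exp (b k / Sc k))
        * Polynomial.X ^ ((k : ℕ) + 1) with hq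
    have hqne : ∀ a b, a ≠ b → q a b ≠ 0 := by
      intro a b hab
      obtain ⟨k0, hk0⟩ := Function.ne_iff.mp hab
      intro h0
      have hco := congrArg (fun P => Polynomial.coeff P ((k0 : ℕ) + 1)) h0
      simp only [hq, Polynomial.finset_sum_coeff, Polynomial.coeff_C_mul,
        Polynomial.coeff_X_pow, Polynomial.coeff_zero, mul_ite, mul_one, mul_zero] at hco
      rw [Finset.sum_eq_single k0 (fun k _ hkk => if_neg (fun he => hkk (Fin.ext (by omega))))
        (fun hk => absurd (Finset.mem_univ k0) hk), if_pos rfl] at hco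
      have hde : a k0 / Sc k0 = b k0 / Sc k0 := Real.exp_injective (by linarith)
      have hScne := ne_of_gt (hSc k0)
      field_simp at hde
      exact hk0 hde
    -- choose a good parameter τ
    have hbadfin : (⋃ a ∈ F, ⋃ b ∈ F, {x : ℝ | a ≠ b ∧ (q a b).eval x = 0}).Finite := by
      refine Set.Finite.biUnion F.finite_toSet fun a _ => Set.Finite.biUnion F.finite_toSet fun b _ => ?_
      by_cases hab : a = b
      · convert Set.finite_empty
        ext x; simp [hab]
      · exact ((Polynomial.finite_setOf_isRoot (hqne a b hab)).subset (fun x hx => hx.2))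
    obtain ⟨τ, hτmem, hτbad⟩ :
        ∃ τ ∈ Set.Ioi (0:ℝ), τ ∉ ⋃ a ∈ F, ⋃ b ∈ F, {x : ℝ | a ≠ b ∧ (q a b).eval x = 0} := by
      have := ((Set.Ioi_infinite (0:ℝ)).diff hbadfin).nonempty
      obtain ⟨τ, hτ⟩ := this
      exact ⟨τ, hτ.1, hτ.2⟩
    have hτ0 : (0:ℝ) < τ := hτmem
    set z : Fin p → ℝ := fun k => τ ^ ((k : ℕ) + 1) with hz
    have hz0 : ∀ k, 0 < z k := fun k => pow_pos hτ0 _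
    set Cv : (Fin p → ℝ) → ℝ := fun a => ∑ k, Real.exp (a k / Sc k) * z k with hCv
    have hCpos : ∀ a, 0 < Cv a := fun a =>
      Finset.sum_pos (fun k _ => mul_pos (Real.exp_pos _) (hz0 k)) hpne
    have hCinj : ∀ a ∈ F, ∀ b ∈ F, Cv a = Cv b → a = b := by
      intro a ha b hb hab
      by_contra hne
      apply hτbad
      refine Set.mem_biUnion ha (Set.mem_biUnion hb ?_)
      refine ⟨hne, ?_⟩
      have : (q a b).eval τ = Cv a - Cv b := by
        simp only [hq, Polynomial.eval_finset_sum, Polynomial.eval_mul, Polynomial.eval_C,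
          Polynomial.eval_pow, Polynomial.eval_X, hCv, hz, sub_mul, Finset.sum_sub_distrib]
      rw [this, hab, sub_self]
    set u : Fin p → ℝ := fun k => -(Sc k * Real.log (z k)) with hu
    have hkey : ∀ sρ : ℝ, 0 < sρ →
        ∑ i, π i * (1 + Cv (μ i) * sρ)⁻¹ = ∑ j, π' j * (1 + Cv (μ' j) * sρ)⁻¹ := by
      intro sρ hsρ
      have hinner : ∀ a : Fin p → ℝ,
          (∑ k, Real.exp (-((Sc k * (-Real.log sρ) + u k) - a k) / Sc k)) = Cv a * sρ := by
        intro a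
        have hterm : ∀ k : Fin p, k ∈ Finset.univ →
            Real.exp (-((Sc k * (-Real.log sρ) + u k) - a k) / Sc k)
            = Real.exp (a k / Sc k) * z k * sρ := by
          intro k _
          have hSk : Sc k ≠ 0 := ne_of_gt (hSc k)
          have harg : -((Sc k * (-Real.log sρ) + u k) - a k) / Sc k
              = Real.log sρ + (a k / Sc k + Real.log (z k)) := by
            rw [hu]; field_simp; ring
          rw [harg, Real.exp_add, Real.exp_add, Real.exp_log hsρ, Real.exp_log (hz0 k)]
          ring
        rw [Finset.sum_congr rfl hterm, ← Finset.sum_mul, hCv]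
      calc ∑ i, π i * (1 + Cv (μ i) * sρ)⁻¹
          = ∑ i, π i * (1 + ∑ k, Real.exp (-((Sc k * (-Real.log sρ) + u k) - μ i k) / Sc k))⁻¹ :=
            Finset.sum_congr rfl fun i _ => by rw [hinner (μ i)]
        _ = ∑ j, π' j * (1 + ∑ k, Real.exp (-((Sc k * (-Real.log sρ) + u k) - μ' j k) / Sc k))⁻¹ :=
            h (fun k => Sc k * (-Real.log sρ) + u k)
        _ = ∑ j, π' j * (1 + Cv (μ' j) * sρ)⁻¹ :=
            Finset.sum_congr rfl fun j _ => by rw [hinner (μ' j)]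
    set w : Fin s ⊕ Fin t → ℝ := Sum.elim π (fun j => -(π' j)) with hw
    set cι : Fin s ⊕ Fin t → ℝ := Sum.elim (fun i => Cv (μ i)) (fun j => Cv (μ' j)) with hcι
    have hfib : ∀ v : ℝ, ∑ x ∈ Finset.univ.filter (fun x => cι x = v), w x = 0 := by
      apply fiberZero cι w
      · rintro (i | j) <;> simp [hcι] <;> exact hCpos _
      · intro sρ hsρ
        rw [Fintype.sum_sum_type]
        simp only [hw, hcι, Sum.elim_inl, Sum.elim_inr, neg_mul]
        rw [hkey sρ hsρ, ← Finset.sum_add_distrib]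
        simp
    have hmem : ∀ i, μ i ∈ F := fun i =>
      Finset.mem_union_left _ (Finset.mem_image_of_mem μ (Finset.mem_univ i))
    have hmem' : ∀ j, μ' j ∈ F := fun j =>
      Finset.mem_union_right _ (Finset.mem_image_of_mem μ' (Finset.mem_univ j))
    have hmatch : ∀ i₀ : Fin s, ∃ j : Fin t, μ' j = μ i₀ ∧ π' j = π i₀ := by
      intro i₀
      by_cases hex : ∃ j, μ' j = μ i₀
      · obtain ⟨j, hj⟩ := hex
        refine ⟨j, hj, ?_⟩
        have hfs : Finset.univ.filter (fun x => cι x = Cv (μ i₀)) = {Sum.inl i₀, Sum.inr j} := by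
          ext x
          simp only [Finset.mem_filter, Finset.mem_univ, true_and, Finset.mem_insert,
            Finset.mem_singleton]
          constructor
          · intro hx
            cases x with
            | inl i' =>
              simp only [hcι, Sum.elim_inl] at hx
              left; exact congrArg Sum.inl (hμ (hCinj _ (hmem i') _ (hmem i₀) hx))
            | inr j' =>
              simp only [hcι, Sum.elim_inr] at hx
              right; exact congrArg Sum.inr (hμ' ((hCinj _ (hmem' j') _ (hmem i₀) hx).trans hj.symm))
          · rintro (rfl | rfl)
            · simp [hcι]
            · simp [hcι, hj]
        have h0 := hfib (Cv (μ i₀))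
        rw [hfs, Finset.sum_pair (by simp)] at h0
        simp only [hw, Sum.elim_inl, Sum.elim_inr] at h0
        linarith
      · exfalso
        have hfs : Finset.univ.filter (fun x => cι x = Cv (μ i₀)) = {Sum.inl i₀} := by
          ext x
          simp only [Finset.mem_filter, Finset.mem_univ, true_and, Finset.mem_singleton]
          constructor
          · intro hx
            cases x with
            | inl i' =>
              simp only [hcι, Sum.elim_inl] at hx
              exact congrArg Sum.inl (hμ (hCinj _ (hmem i') _ (hmem i₀) hx))
            | inr j' =>
              simp only [hcι, Sum.elim_inr] at hx
              exact absurd ⟨j', hCinj _ (hmem' j') _ (hmem i₀) hx⟩ hex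
          · rintro rfl; simp [hcι]
        have h0 := hfib (Cv (μ i₀))
        rw [hfs, Finset.sum_singleton] at h0
        simp only [hw, Sum.elim_inl] at h0
        exact absurd h0 (ne_of_gt (hπ i₀).1)
    have hmatch' : ∀ j₀ : Fin t, ∃ i : Fin s, μ i = μ' j₀ := by
      intro j₀
      by_contra hex
      push_neg at hex
      have hfs : Finset.univ.filter (fun x => cι x = Cv (μ' j₀)) = {Sum.inr j₀} := by
        ext x
        simp only [Finset.mem_filter, Finset.mem_univ, true_and, Finset.mem_singleton]
        constructor
        · intro hx
          cases x with
          | inl i' =>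
            simp only [hcι, Sum.elim_inl] at hx
            exact absurd (hCinj _ (hmem i') _ (hmem' j₀) hx) (hex i')
          | inr j' =>
            simp only [hcι, Sum.elim_inr] at hx
            exact congrArg Sum.inr (hμ' (hCinj _ (hmem' j') _ (hmem' j₀) hx))
        · rintro rfl; simp [hcι]
      have h0 := hfib (Cv (μ' j₀))
      rw [hfs, Finset.sum_singleton] at h0
      simp only [hw, Sum.elim_inr] at h0
      have := (hπ' j₀).1
      linarith
    choose e he1 he2 using hmatch
    have hbij : Function.Bijective e := by
      constructor
      · intro i i' hii
        apply hμ
        rw [← he1 i, ← he1 i', hii]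
      · intro j₀
        obtain ⟨i, hi⟩ := hmatch' j₀
        exact ⟨i, hμ' (by rw [he1 i, hi])⟩
    exact ⟨Equiv.ofBijective e hbij, fun i => ⟨he2 i, he1 i⟩⟩
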